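/- Let $s_0, n \geq 1$ with $m = \lceil \log_2 s_0 \rceil$, let $A_0,\dots,A_{s_0-1}$ be nonzero complex numbers, let $S_c : \{0,\dots,s_0-1\} \to \mathcal{P}(\{0,\dots,2^n-1\})$ assign column index sets, and for each $l$ let $c_l : S_c(l) \to \{0,\dots,2^n-1\}$ be injective. Define $A \in \mathbb{C}^{2^n\times 2^n}$ by $A_{ij} = A_l$ if there exists $l < s_0$ with $j \in S_c(l)$ and $i = c_l(j)$, and $A_{ij}=0$ otherwise; assume the pairs $(c_l(j), j)$ over valid $(l,j)$ are distinct so $A$ is well-defined. Let $O_c$ be a unitary on $\mathbb{C}^{2^m}\otimes\mathbb{C}^2\otimes\mathbb{C}^{2^n}$ with $O_c |l\rangle|0\rangle|j\rangle = |l\rangle|0\rangle|c_l(j)\rangle$ when $l< s_0,\ j\in S_c(l)$, and $O_c|l\rangle|0\rangle|j\rangle = |l\rangle|1\rangle|j\rangle$ otherwise. Let PREP and UNPREP be unitaries with $\mathrm{PREP}|0\rangle^{\otimes m} = \alpha^{-1/2}\sum_{l<s_0}\sqrt{A_l}|l\rangle$ and $\mathrm{UNPREP}^\dagger|0\rangle^{\otimes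 m} = \alpha^{-1/2}\sum_{l<s_0}\sqrt{A_l}^*|l\rangle$, where $\alpha = \sum_{l<s_0}|A_l|$. Then for all $i,j$, $\langle 0|^{\otimes m}\langle 0|\langle i| (\mathrm{UNPREP}\otimes I) O_c (\mathrm{PREP}\otimes I) |0\rangle^{\otimes m}|0\rangle|j\rangle = A_{ij}/\alpha$. -/

import Mathlib

open Kronecker Matrix

/-- Principal square root of a complex number. -/
noncomputable def csqrt (c : ℂ) : ℂ := c ^ (1 / 2 : ℂ)

lemma csqrt_mul_self {c : ℂ} (hc : c ≠ 0) : csqrt c * csqrt c = c := by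
  rw [csqrt, ← Complex.cpow_add _ _ hc]
  norm_num

/-- Theorem 3.1 (dictionary-based block encoding of sparse matrices): given the column
oracle `O_c`, the state preparation oracles `PREP`/`UNPREP` for the dictionary data of the
sparse matrix `A`, the unitary `(UNPREP ⊗ I) O_c (PREP ⊗ I)` block-encodes `A` with
subnormalization `α = ∑_{l<s₀} |A_l|`. -/
theorem dictionary_block_encoding {s₀ n m : ℕ} (hs₀ : 1 ≤ s₀) (hn : 1 ≤ n)
    (hm : m = Nat.clog 2 s₀)
    (A : ℕ → ℂ) (hAne : ∀ l < s₀, A l ≠ 0)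
    (Sc : ℕ → Finset (Fin (2 ^ n)))
    (c : ℕ → Fin (2 ^ n) → Fin (2 ^ n))
    (hinj : ∀ l < s₀, Set.InjOn (c l) (Sc l))
    (hdistinct : ∀ l l' : ℕ, l < s₀ → l' < s₀ → ∀ j : Fin (2 ^ n),
      j ∈ Sc l → j ∈ Sc l' → c l j = c l' j → l = l')
    (Amat : Matrix (Fin (2 ^ n)) (Fin (2 ^ n)) ℂ)
    (hA1 : ∀ l < s₀, ∀ j ∈ Sc l, Amat (c l j) j = A l)
    (hA0 : ∀ i j : Fin (2 ^ n), (¬ ∃ l, l < s₀ ∧ j ∈ Sc l ∧ i = c l j) → Amat i j = 0)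
    (α : ℝ) (hα : α = ∑ l ∈ Finset.range s₀, ‖A l‖)
    (Oc : Matrix (Fin (2 ^ m) × Fin 2 × Fin (2 ^ n)) (Fin (2 ^ m) × Fin 2 × Fin (2 ^ n)) ℂ)
    (hOcU : Oc ∈ Matrix.unitaryGroup (Fin (2 ^ m) × Fin 2 × Fin (2 ^ n)) ℂ)
    (hOc1 : ∀ (l : Fin (2 ^ m)) (j : Fin (2 ^ n)), (l : ℕ) < s₀ → j ∈ Sc (l : ℕ) →
      Oc.mulVec (Pi.single (l, 0, j) 1) = Pi.single (l, 0, c (l : ℕ) j) 1)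
    (hOc2 : ∀ (l : Fin (2 ^ m)) (j : Fin (2 ^ n)), ¬ ((l : ℕ) < s₀ ∧ j ∈ Sc (l : ℕ)) →
      Oc.mulVec (Pi.single (l, 0, j) 1) = Pi.single (l, 1, j) 1)
    (PREP UNPREP : Matrix (Fin (2 ^ m)) (Fin (2 ^ m)) ℂ)
    (hPU : PREP ∈ Matrix.unitaryGroup (Fin (2 ^ m)) ℂ)
    (hUU : UNPREP ∈ Matrix.unitaryGroup (Fin (2 ^ m)) ℂ)
    (hPREP : PREP.mulVec (Pi.single (⟨0, Nat.two_pow_pos m⟩ : Fin (2 ^ m)) 1) =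
      fun l : Fin (2 ^ m) => if (l : ℕ) < s₀ then csqrt (A (l : ℕ)) / (Real.sqrt α : ℂ) else 0)
    (hUNPREP : Matrix.mulVec UNPREPᴴ (Pi.single (⟨0, Nat.two_pow_pos m⟩ : Fin (2 ^ m)) 1) =
      fun l : Fin (2 ^ m) => if (l : ℕ) < s₀ then star (csqrt (A (l : ℕ))) / (Real.sqrt α : ℂ) else 0) :
    ∀ i j : Fin (2 ^ n),
      ((UNPREP ⊗ₖ (1 : Matrix (Fin 2 × Fin (2 ^ n)) (Fin 2 × Fin (2 ^ n)) ℂ)) * Oc *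
          (PREP ⊗ₖ (1 : Matrix (Fin 2 × Fin (2 ^ n)) (Fin 2 × Fin (2 ^ n)) ℂ)))
        (⟨0, Nat.two_pow_pos m⟩, 0, i) (⟨0, Nat.two_pow_pos m⟩, 0, j)
        = Amat i j / (α : ℂ) := by
  intro i j
  set z0 : Fin (2 ^ m) := ⟨0, Nat.two_pow_pos m⟩ with hz0
  -- basic facts
  have hs₀le : s₀ ≤ 2 ^ m := hm ▸ Nat.le_pow_clog one_lt_two s₀
  have hαpos : 0 < α := by
    rw [hα]
    refine Finset.sum_pos' (fun l _ => norm_nonneg _) ?_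
    exact ⟨0, Finset.mem_range.mpr hs₀, (norm_pos_iff.mpr (hAne 0 hs₀))⟩
  have hαC : ((Real.sqrt α : ℝ) : ℂ) * ((Real.sqrt α : ℝ) : ℂ) = (α : ℂ) := by
    rw [← Complex.ofReal_mul, Real.mul_self_sqrt hαpos.le]
  have hαne : (α : ℂ) ≠ 0 := by
    exact_mod_cast Complex.ofReal_ne_zero.mpr hαpos.ne'
  have hsqne : ((Real.sqrt α : ℝ) : ℂ) ≠ 0 := by
    simpa using (Real.sqrt_pos.mpr hαpos).ne'
  -- values of PREP and UNPREP columns / rows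
  have hP : ∀ l : Fin (2 ^ m), PREP l z0 =
      if (l : ℕ) < s₀ then csqrt (A (l : ℕ)) / (Real.sqrt α : ℂ) else 0 := by
    intro l
    have := congrFun hPREP l
    simpa using this
  have hU : ∀ l : Fin (2 ^ m), UNPREP z0 l =
      if (l : ℕ) < s₀ then csqrt (A (l : ℕ)) / (Real.sqrt α : ℂ) else 0 := by
    intro l
    have h := congrFun hUNPREP l
    simp only [Matrix.mulVec_single_one, Matrix.col_apply, Matrix.conjTranspose_apply] at h
    have := congrArg star h
    rw [star_star] at this
    rw [this]
    by_cases hl : (l : ℕ) < s₀ <;>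
      simp [hl, star_div₀, Complex.star_def, Complex.conj_ofReal]
  -- the inner product of the UNPREP row with a column of Oc
  have hcol : ∀ l : Fin (2 ^ m),
      (∑ w, (UNPREP ⊗ₖ (1 : Matrix (Fin 2 × Fin (2 ^ n)) (Fin 2 × Fin (2 ^ n)) ℂ))
          (z0, ((0 : Fin 2), i)) w * Oc w (l, ((0 : Fin 2), j)))
        = if (l : ℕ) < s₀ ∧ j ∈ Sc (l : ℕ) ∧ i = c (l : ℕ) j then UNPREP z0 l else 0 := by
    intro l
    have hOcw : ∀ w, Oc w (l, ((0 : Fin 2), j)) = Oc.mulVec (Pi.single (l, 0, j) 1) w := by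
      intro w; simp [Matrix.mulVec_single]
    have hsum : ∀ (a : Fin (2 ^ m) × Fin 2 × Fin (2 ^ n))
        (f : Fin (2 ^ m) × Fin 2 × Fin (2 ^ n) → ℂ),
        (∑ w, f w * (Pi.single a 1 : Fin (2 ^ m) × Fin 2 × Fin (2 ^ n) → ℂ) w) = f a := by
      intro a f
      have : ∀ w, f w * (Pi.single a 1 : Fin (2 ^ m) × Fin 2 × Fin (2 ^ n) → ℂ) w = if w = a then f w else 0 := by
        intro w
        by_cases hw : w = a <;> simp [hw, Pi.single_apply]
      simp only [this]
      exact Finset.sum_ite_eq' Finset.univ a f |>.trans (by simp)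
    simp only [hOcw]
    by_cases hcase : (l : ℕ) < s₀ ∧ j ∈ Sc (l : ℕ)
    · rw [hOc1 l j hcase.1 hcase.2, hsum]
      rcases hcase with ⟨hls, hjS⟩
      by_cases hic : i = c (l : ℕ) j
      · simp [hls, hjS, hic, Matrix.kroneckerMap_apply, Matrix.one_apply, Prod.ext_iff]
      · simp [hls, hjS, hic, Matrix.kroneckerMap_apply, Matrix.one_apply, Prod.ext_iff]
    · rw [hOc2 l j hcase, hsum]
      have hneg : ¬ ((l : ℕ) < s₀ ∧ j ∈ Sc (l : ℕ) ∧ i = c (l : ℕ) j) := by tauto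
      have h01 : ((0 : Fin 2), i) ≠ ((1 : Fin 2), j) := by
        simp [Prod.ext_iff]
      simp [hneg, Matrix.kroneckerMap_apply, Matrix.one_apply, h01, Prod.ext_iff]
  -- expand the matrix entry
  have expand : ((UNPREP ⊗ₖ (1 : Matrix (Fin 2 × Fin (2 ^ n)) (Fin 2 × Fin (2 ^ n)) ℂ)) * Oc *
          (PREP ⊗ₖ (1 : Matrix (Fin 2 × Fin (2 ^ n)) (Fin 2 × Fin (2 ^ n)) ℂ)))
        (z0, ((0 : Fin 2), i)) (z0, ((0 : Fin 2), j))
      = ∑ l : Fin (2 ^ m),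
          (∑ w, (UNPREP ⊗ₖ (1 : Matrix (Fin 2 × Fin (2 ^ n)) (Fin 2 × Fin (2 ^ n)) ℂ))
            (z0, ((0 : Fin 2), i)) w * Oc w (l, ((0 : Fin 2), j))) * PREP l z0 := by
    rw [Matrix.mul_apply]
    rw [Fintype.sum_prod_type]
    refine Finset.sum_congr rfl fun l _ => ?_
    have hx : ∀ x : Fin 2 × Fin (2 ^ n),
        ((UNPREP ⊗ₖ (1 : Matrix (Fin 2 × Fin (2 ^ n)) (Fin 2 × Fin (2 ^ n)) ℂ)) * Oc)
            (z0, ((0 : Fin 2), i)) (l, x) *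
          (PREP ⊗ₖ (1 : Matrix (Fin 2 × Fin (2 ^ n)) (Fin 2 × Fin (2 ^ n)) ℂ)) (l, x)
            (z0, ((0 : Fin 2), j))
        = if x = ((0 : Fin 2), j) then
            (∑ w, (UNPREP ⊗ₖ (1 : Matrix (Fin 2 × Fin (2 ^ n)) (Fin 2 × Fin (2 ^ n)) ℂ))
              (z0, ((0 : Fin 2), i)) w * Oc w (l, ((0 : Fin 2), j))) * PREP l z0
          else 0 := by
      intro x
      by_cases hxx : x = ((0 : Fin 2), j)
      · subst hxx
        rw [if_pos rfl, Matrix.mul_apply]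
        simp [Matrix.kroneckerMap_apply, Matrix.one_apply]
      · rw [if_neg hxx]
        have h0 : (PREP ⊗ₖ (1 : Matrix (Fin 2 × Fin (2 ^ n)) (Fin 2 × Fin (2 ^ n)) ℂ)) (l, x)
            (z0, ((0 : Fin 2), j)) = 0 := by
          simp [Matrix.kroneckerMap_apply, Matrix.one_apply, hxx]
        rw [h0, mul_zero]
    simp only [hx]
    exact (Finset.sum_ite_eq' Finset.univ _ _).trans (by simp)
  rw [expand]
  have hterm : ∀ l : Fin (2 ^ m),
      (if (l : ℕ) < s₀ ∧ j ∈ Sc (l : ℕ) ∧ i = c (l : ℕ) j then UNPREP z0 l else 0) * PREP l z0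
        = if (l : ℕ) < s₀ ∧ j ∈ Sc (l : ℕ) ∧ i = c (l : ℕ) j then A (l : ℕ) / (α : ℂ) else 0 := by
    intro l
    by_cases h : (l : ℕ) < s₀ ∧ j ∈ Sc (l : ℕ) ∧ i = c (l : ℕ) j
    · rw [if_pos h, if_pos h, hU l, hP l]
      simp only [if_pos h.1]
      rw [div_mul_div_comm, csqrt_mul_self (hAne _ h.1), hαC]
    · rw [if_neg h, if_neg h, zero_mul]
  simp only [hcol, hterm]
  by_cases hex : ∃ l, l < s₀ ∧ j ∈ Sc l ∧ i = c l j
  · obtain ⟨l₀, hls, hjS, hic⟩ := hex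
    have hl₀m : l₀ < 2 ^ m := lt_of_lt_of_le hls hs₀le
    set L : Fin (2 ^ m) := ⟨l₀, hl₀m⟩ with hL
    have hLv : (L : ℕ) = l₀ := rfl
    rw [Finset.sum_eq_single L]
    · rw [if_pos ⟨by simpa [hLv] using hls, by simpa [hLv] using hjS, by simpa [hLv] using hic⟩]
      rw [hLv, hic, hA1 l₀ hls j hjS]
    · intro l _ hne
      rw [if_neg]
      rintro ⟨hls', hjS', hic'⟩
      apply hne
      have : (l : ℕ) = l₀ := hdistinct _ _ hls' hls j hjS' hjS (hic'.symm.trans hic)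
      exact Fin.ext this
    · intro h; exact absurd (Finset.mem_univ L) h
  · have hz : ∀ l : Fin (2 ^ m), ¬ ((l : ℕ) < s₀ ∧ j ∈ Sc (l : ℕ) ∧ i = c (l : ℕ) j) := by
      intro l hl
      exact hex ⟨l, hl⟩
    simp only [hz, if_neg, if_false]
    rw [Finset.sum_const_zero, hA0 i j hex, zero_div]
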